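/- Let n and m be positive integers with 2n ≤ m and m·n ≤ 2^n, let t = ⌊log₂(m/2)⌋ (so t < n) and ℓ = 2^t. Then there exists a bijection s from {1,…,ℓ} × {1,…,2^{n−t}} onto F_2^n (so the two-dimensional array {s(j,k)} partitions the set of n-bit strings) such that: (1) for every j ∈ {1,…,ℓ}, the last n−t coordinates of s(j,1) are all 0, and for every j and all k, k' ∈ {1,…,2^{n−t}}, s(j,k) and s(j,k') agree in their first t coordinates; (2) for every j ∈ {1,…,ℓ} and every k ∈ {1,…,2^{n−t}−1}, s(j,k) and s(j,k+1) differ in exactly one coordinate; (3) for every k ∈ {1,…,2^{n−t}−1} and every t' ∈ {t+1,…,n}, the number of indices j ∈ {1,…,ℓ} such that s(j,k) and s(j,k+1) differ in coordinate t' is at most m/(2(n−t)) + 1 (as an inequality of real numbers). -/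

import Mathlib

private def gcB (x i : ℕ) : ZMod 2 := if x.testBit i then 1 else 0

private lemma gcB_ne_iff (x y i : ℕ) : gcB x i ≠ gcB y i ↔ (x ^^^ y).testBit i = true := by
  rcases hx : x.testBit i <;> rcases hy : y.testBit i <;>
    simp [gcB, hx, hy, Nat.testBit_xor]

private lemma gcB_eq (x y i : ℕ) (h : gcB x i = gcB y i) : x.testBit i = y.testBit i := by
  by_contra hne
  have : gcB x i ≠ gcB y i := by
    rw [gcB_ne_iff, Nat.testBit_xor]
    revert hne; cases x.testBit i <;> cases y.testBit i <;> simp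
  exact this h

private def gray (k : ℕ) : ℕ := k ^^^ k / 2

private lemma gray_lt {k d : ℕ} (h : k < 2 ^ d) : gray k < 2 ^ d :=
  Nat.xor_lt_two_pow h (lt_of_le_of_lt (Nat.div_le_self _ _) h)

private lemma div2_xor (a b : ℕ) : a / 2 ^^^ b / 2 = (a ^^^ b) / 2 := by
  apply Nat.eq_of_testBit_eq
  intro i
  simp [Nat.testBit_xor, ← Nat.testBit_succ]

private lemma gray_inj : Function.Injective gray := by
  intro a b h
  have hx : a ^^^ b = a / 2 ^^^ b / 2 := by
    apply Nat.eq_of_testBit_eq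
    intro i
    have hb := congrArg (fun z => z.testBit i) h
    simp only [gray, Nat.testBit_xor] at hb ⊢
    revert hb
    cases a.testBit i <;> cases b.testBit i <;>
      cases (a / 2).testBit i <;> cases (b / 2).testBit i <;> simp
  rw [div2_xor] at hx
  have h0 : a ^^^ b = 0 := by omega
  exact Nat.eq_of_testBit_eq fun i => by
    have h5 := congrArg (fun z => z.testBit i) h0
    simp only [Nat.testBit_xor, Nat.zero_testBit] at h5
    revert h5; cases a.testBit i <;> cases b.testBit i <;> simp

private lemma xor_add_one : ∀ k : ℕ, ∃ w, k ^^^ (k + 1) = 2 ^ (w + 1) - 1 := by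
  intro k
  induction k using Nat.strong_induction_on with
  | _ k ih =>
    rcases Nat.even_or_odd k with ⟨a, ha⟩ | ⟨a, ha⟩
    · refine ⟨0, ?_⟩
      subst ha
      apply Nat.eq_of_testBit_eq; intro i
      cases i with
      | zero =>
        rw [Nat.testBit_xor, Nat.testBit_zero, Nat.testBit_zero, Nat.testBit_zero]
        have h1 : (a + a) % 2 = 0 := by omega
        have h2 : (a + a + 1) % 2 = 1 := by omega
        simp [h1, h2]
      | succ i =>
        rw [Nat.testBit_xor, Nat.testBit_succ, Nat.testBit_succ, Nat.testBit_succ]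
        have h1 : (a + a) / 2 = a := by omega
        have h2 : (a + a + 1) / 2 = a := by omega
        have h3 : (2 ^ (0 + 1) - 1) / 2 = 0 := by norm_num
        rw [h1, h2, h3]
        simp
    · obtain ⟨w, hw⟩ := ih a (by omega)
      refine ⟨w + 1, ?_⟩
      subst ha
      apply Nat.eq_of_testBit_eq; intro i
      cases i with
      | zero =>
        rw [Nat.testBit_xor, Nat.testBit_zero, Nat.testBit_zero, Nat.testBit_zero]
        have h1 : (2 * a + 1) % 2 = 1 := by omega
        have h2 : (2 * a + 1 + 1) % 2 = 0 := by omega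
        have h3 : (2 ^ (w + 1 + 1) - 1) % 2 = 1 := by
          have : 2 ^ (w + 1 + 1) = 2 * 2 ^ (w + 1) := by ring
          have h4 : 1 ≤ 2 ^ (w + 1) := Nat.one_le_two_pow
          omega
        simp [h1, h2, h3]
      | succ i =>
        rw [Nat.testBit_xor, Nat.testBit_succ, Nat.testBit_succ, Nat.testBit_succ]
        have h1 : (2 * a + 1) / 2 = a := by omega
        have h2 : (2 * a + 1 + 1) / 2 = a + 1 := by omega
        have h3 : (2 ^ (w + 1 + 1) - 1) / 2 = 2 ^ (w + 1) - 1 := by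
          have : 2 ^ (w + 1 + 1) = 2 * 2 ^ (w + 1) := by ring
          omega
        rw [h1, h2, h3, ← Nat.testBit_xor, hw]

private lemma gray_step (k : ℕ) : ∃ w, gray k ^^^ gray (k + 1) = 2 ^ w := by
  obtain ⟨w, hw⟩ := xor_add_one k
  refine ⟨w, ?_⟩
  have h1 : gray k ^^^ gray (k + 1) = (k ^^^ (k + 1)) ^^^ (k / 2 ^^^ (k + 1) / 2) := by
    unfold gray
    apply Nat.eq_of_testBit_eq; intro i
    simp only [Nat.testBit_xor]
    cases k.testBit i <;> cases (k + 1).testBit i <;>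
      cases (k / 2).testBit i <;> cases ((k + 1) / 2).testBit i <;> simp
  rw [h1, div2_xor, hw]
  have h2 : (2 ^ (w + 1) - 1) / 2 = 2 ^ w - 1 := by
    have : 2 ^ (w + 1) = 2 * 2 ^ w := by ring
    omega
  rw [h2]
  apply Nat.eq_of_testBit_eq; intro i
  rw [Nat.testBit_xor, Nat.testBit_two_pow_sub_one, Nat.testBit_two_pow_sub_one,
    Nat.testBit_two_pow]
  rcases Nat.lt_trichotomy i w with h | h | h
  · simp [h, Nat.lt_succ_of_lt h]; omega
  · subst h; simp
  · have h1' : ¬ i < w := by omega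
    have h2' : ¬ i < w + 1 := by omega
    have h3' : w ≠ i := by omega
    simp [h1', h2', h3']

private lemma mod_solve {d : ℕ} (hd : 0 < d) (j v : ℕ) :
    ((v + (d - j % d)) % d + j) % d = v % d := by
  rw [Nat.mod_add_mod]
  have h1 : j % d < d := Nat.mod_lt _ hd
  have h2 : d * (j / d) + j % d = j := Nat.div_add_mod j d
  have h3 : v + (d - j % d) + j = v + d * (1 + j / d) := by
    have : d * (1 + j / d) = d + d * (j / d) := by ring
    omega
  rw [h3, Nat.add_mul_mod_self_left]

private lemma mod_cancel {d x x' j : ℕ} (hx : x < d) (hx' : x' < d)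
    (h : (x + j) % d = (x' + j) % d) : x = x' := by
  have h2 : x ≡ x' [MOD d] := Nat.ModEq.add_right_cancel' j h
  have h3 : x % d = x' % d := h2
  rwa [Nat.mod_eq_of_lt hx, Nat.mod_eq_of_lt hx'] at h3

private lemma mod_cancel_left {d j j' x : ℕ} (h : (x + j) % d = (x + j') % d) :
    j % d = j' % d :=
  Nat.ModEq.add_left_cancel' x h

/-- Existence of a two-dimensional Gray-code array partitioning `F_2^n`.
Given positive integers `n, m` with `2n ≤ m` and `m·n ≤ 2^n`, `t = ⌊log₂(m/2)⌋` and
`ℓ = 2^t`, there is a bijection `s : {1,…,ℓ} × {1,…,2^{n−t}} → F_2^n` such that: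
(1) the last `n−t` coordinates of `s(j,1)` are all `0`, and strings in each row share the
same first `t` coordinates; (2) `s(j,k)` and `s(j,k+1)` differ in exactly one coordinate;
(3) for each `k` and each coordinate `t' ∈ {t+1,…,n}`, at most `m/(2(n−t)) + 1` indices `j`
have `s(j,k)` and `s(j,k+1)` differing in coordinate `t'`.
(Coordinates are 1-indexed; the `Fin n` index `c` corresponds to coordinate `c + 1`.) -/
theorem exists_gray_code_array (n m t ℓ : ℕ)
    (hn : 1 ≤ n) (hm : 1 ≤ m) (h2n : 2 * n ≤ m) (hmn : m * n ≤ 2 ^ n)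
    (ht : t = Nat.log 2 (m / 2)) (hℓ : ℓ = 2 ^ t) :
    ∃ s : Fin ℓ × Fin (2 ^ (n - t)) → (Fin n → ZMod 2),
      Function.Bijective s ∧
      (∀ (j : Fin ℓ) (k₀ : Fin (2 ^ (n - t))), (k₀ : ℕ) = 0 →
        ∀ c : Fin n, t ≤ (c : ℕ) → s (j, k₀) c = 0) ∧
      (∀ (j : Fin ℓ) (k k' : Fin (2 ^ (n - t))) (c : Fin n),
        (c : ℕ) < t → s (j, k) c = s (j, k') c) ∧
      (∀ (j : Fin ℓ) (k k' : Fin (2 ^ (n - t))), (k' : ℕ) = (k : ℕ) + 1 →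
        (Finset.univ.filter fun c : Fin n => s (j, k) c ≠ s (j, k') c).card = 1) ∧
      (∀ (k k' : Fin (2 ^ (n - t))), (k' : ℕ) = (k : ℕ) + 1 →
        ∀ c : Fin n, t ≤ (c : ℕ) →
          ((Finset.univ.filter fun j : Fin ℓ => s (j, k) c ≠ s (j, k') c).card : ℝ) ≤
            (m : ℝ) / (2 * ((n : ℝ) - (t : ℝ))) + 1) := by
  have hm2 : 1 ≤ m / 2 := by omega
  have h2ℓ : 2 * 2 ^ t ≤ m := by
    have h := Nat.pow_log_le_self 2 (x := m / 2) (by omega)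
    rw [← ht] at h
    omega
  have htn : t < n := by
    by_contra hcon
    push_neg at hcon
    have h1 : (2 : ℕ) ^ n ≤ 2 ^ t := Nat.pow_le_pow_right (by norm_num) hcon
    have h2 : m ≤ m * n := Nat.le_mul_of_pos_right m (by omega)
    omega
  set d := n - t with hdd
  have hd : 0 < d := by omega
  have htd : t + d = n := by omega
  have hk2 : ∀ k : Fin (2 ^ (n - t)), (k : ℕ) < 2 ^ d := fun k => k.isLt
  refine ⟨fun p c => if (c : ℕ) < t then gcB p.1 c
    else gcB (gray p.2) (((c : ℕ) - t + p.1) % d), ?_, ?_, ?_, ?_, ?_⟩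
  · rw [Fintype.bijective_iff_injective_and_card]
    constructor
    · rintro ⟨j, k⟩ ⟨j', k'⟩ h
      have hj : j = j' := by
        apply Fin.ext
        apply Nat.eq_of_testBit_eq
        intro i
        by_cases hi : i < t
        · have hc := congrFun h ⟨i, by omega⟩
          simp only [hi, if_pos] at hc
          exact gcB_eq _ _ _ hc
        · have hj1 : (j : ℕ) < 2 ^ i := by
            have h0 : (j : ℕ) < 2 ^ t := by rw [← hℓ]; exact j.isLt
            exact lt_of_lt_of_le h0 (Nat.pow_le_pow_right (by norm_num) (by omega))
          have hj2 : (j' : ℕ) < 2 ^ i := by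
            have h0 : (j' : ℕ) < 2 ^ t := by rw [← hℓ]; exact j'.isLt
            exact lt_of_lt_of_le h0 (Nat.pow_le_pow_right (by norm_num) (by omega))
          rw [Nat.testBit_lt_two_pow hj1, Nat.testBit_lt_two_pow hj2]
      subst hj
      have hk : k = k' := by
        apply Fin.ext
        apply gray_inj
        apply Nat.eq_of_testBit_eq
        intro i
        by_cases hi : i < d
        · set x := (i + (d - (j : ℕ) % d)) % d with hxdef
          have hx : x < d := Nat.mod_lt _ hd
          have hxj : (x + (j : ℕ)) % d = i := by
            rw [hxdef, mod_solve hd, Nat.mod_eq_of_lt hi]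
          have hc := congrFun h ⟨t + x, by omega⟩
          have hct : ¬ (t + x < t) := by omega
          simp only [hct, if_false, if_neg, Fin.val_mk] at hc
          rw [show t + x - t = x from by omega, hxj] at hc
          exact gcB_eq _ _ _ hc
        · have hg1 : gray (k : ℕ) < 2 ^ i :=
            lt_of_lt_of_le (gray_lt (hk2 k)) (Nat.pow_le_pow_right (by norm_num) (by omega))
          have hg2 : gray (k' : ℕ) < 2 ^ i :=
            lt_of_lt_of_le (gray_lt (hk2 k')) (Nat.pow_le_pow_right (by norm_num) (by omega))
          rw [Nat.testBit_lt_two_pow hg1, Nat.testBit_lt_two_pow hg2]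
      rw [hk]
    · simp only [Fintype.card_prod, Fintype.card_fin, Fintype.card_fun, ZMod.card]
      have he : t + (n - t) = n := by omega
      rw [hℓ, ← pow_add, he]
  · intro j k₀ hk0 c hc
    have hct : ¬ ((c : ℕ) < t) := by omega
    simp [hct, hk0, gray, gcB, Nat.zero_testBit]
  · intro j k k' c hc
    simp [hc]
  · intro j k k' hkk
    have hk1 : (k : ℕ) + 1 < 2 ^ d := by rw [← hkk]; exact hk2 k'
    obtain ⟨w, hw⟩ := gray_step (k : ℕ)
    have hwd : w < d := by
      have hlt : (2 : ℕ) ^ w < 2 ^ d := by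
        rw [← hw]; exact Nat.xor_lt_two_pow (gray_lt (hk2 k)) (gray_lt hk1)
      exact (Nat.pow_lt_pow_iff_right (by norm_num)).mp hlt
    set x₀ := (w + (d - (j : ℕ) % d)) % d with hx0def
    have hx0 : x₀ < d := Nat.mod_lt _ hd
    have hx0j : (x₀ + (j : ℕ)) % d = w := by
      rw [hx0def, mod_solve hd, Nat.mod_eq_of_lt hwd]
    have hset : (Finset.univ.filter fun c : Fin n =>
        (if (c : ℕ) < t then gcB (j : ℕ) c else gcB (gray (k : ℕ)) (((c : ℕ) - t + j) % d)) ≠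
        (if (c : ℕ) < t then gcB (j : ℕ) c else gcB (gray (k' : ℕ)) (((c : ℕ) - t + j) % d)))
        = {(⟨t + x₀, by omega⟩ : Fin n)} := by
      ext c
      simp only [Finset.mem_filter, Finset.mem_univ, true_and, Finset.mem_singleton]
      constructor
      · intro hne
        by_cases hct : (c : ℕ) < t
        · simp [hct] at hne
        · rw [if_neg hct, if_neg hct, gcB_ne_iff, hkk, hw, Nat.testBit_two_pow] at hne
          have he : ((c : ℕ) - t + (j : ℕ)) % d = w := (of_decide_eq_true hne).symm
          have hcd : (c : ℕ) - t < d := by omega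
          have hx := mod_cancel hcd hx0 (by rw [he, hx0j])
          exact Fin.ext (show (c : ℕ) = t + x₀ by omega)
      · intro hceq
        subst hceq
        have hct : ¬ (t + x₀ < t) := by omega
        rw [Fin.val_mk, if_neg hct, if_neg hct, gcB_ne_iff,
          show t + x₀ - t = x₀ from by omega, hx0j, hkk, hw, Nat.testBit_two_pow]
        simp
    rw [hset, Finset.card_singleton]
  · intro k k' hkk c hc
    have hct : ¬ ((c : ℕ) < t) := by omega
    have hk1 : (k : ℕ) + 1 < 2 ^ d := by rw [← hkk]; exact hk2 k'
    obtain ⟨w, hw⟩ := gray_step (k : ℕ)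
    have hcard : (Finset.univ.filter fun j : Fin ℓ =>
        (if (c : ℕ) < t then gcB (j : ℕ) c else gcB (gray (k : ℕ)) (((c : ℕ) - t + j) % d)) ≠
        (if (c : ℕ) < t then gcB (j : ℕ) c else gcB (gray (k' : ℕ)) (((c : ℕ) - t + j) % d))).card
        ≤ ℓ / d + 1 := by
      rw [← Finset.card_range (ℓ / d + 1)]
      apply Finset.card_le_card_of_injOn (fun j : Fin ℓ => (j : ℕ) / d) ?_ ?_
      · intro j _
        simp only [Finset.mem_range]
        have : (j : ℕ) / d ≤ ℓ / d := Nat.div_le_div_right (le_of_lt j.isLt)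
        simpa [Finset.mem_range] using Nat.lt_succ_of_le this
      · intro j hj j' hj' hdiv
        simp only [Finset.coe_filter, Set.mem_setOf_eq, Finset.mem_univ, true_and,
          if_neg hct] at hj hj'
        rw [gcB_ne_iff, hkk, hw, Nat.testBit_two_pow] at hj hj'
        have e1 : ((c : ℕ) - t + (j : ℕ)) % d = w := (of_decide_eq_true hj).symm
        have e2 : ((c : ℕ) - t + (j' : ℕ)) % d = w := (of_decide_eq_true hj').symm
        have hmod : (j : ℕ) % d = (j' : ℕ) % d := mod_cancel_left (by rw [e1, e2])
        have hdiv' : (j : ℕ) / d = (j' : ℕ) / d := hdiv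
        have ha := Nat.div_add_mod (j : ℕ) d
        have hb := Nat.div_add_mod (j' : ℕ) d
        rw [hdiv', hmod] at ha
        exact Fin.ext (by omega)
    have hdr : ((d : ℕ) : ℝ) = (n : ℝ) - (t : ℝ) := by
      rw [hdd]
      push_cast [Nat.cast_sub (le_of_lt htn)]
      ring
    have hd0 : (0 : ℝ) < (d : ℝ) := by exact_mod_cast hd
    calc ((Finset.univ.filter fun j : Fin ℓ =>
        (if (c : ℕ) < t then gcB (j : ℕ) c else gcB (gray (k : ℕ)) (((c : ℕ) - t + j) % d)) ≠
        (if (c : ℕ) < t then gcB (j : ℕ) c else gcB (gray (k' : ℕ)) (((c : ℕ) - t + j) % d))).card : ℝ)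
        ≤ ((ℓ / d + 1 : ℕ) : ℝ) := by exact_mod_cast hcard
      _ ≤ (ℓ : ℝ) / (d : ℝ) + 1 := by
          push_cast
          have := Nat.cast_div_le (α := ℝ) (m := ℓ) (n := d)
          linarith
      _ ≤ (m : ℝ) / (2 * ((n : ℝ) - (t : ℝ))) + 1 := by
          rw [← hdr]
          have hml : 2 * (ℓ : ℝ) ≤ (m : ℝ) := by
            have : 2 * ℓ ≤ m := by rw [hℓ]; exact h2ℓ
            exact_mod_cast this
          have h1 : (ℓ : ℝ) / (d : ℝ) ≤ (m : ℝ) / (2 * (d : ℝ)) := by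
            rw [div_le_div_iff₀ hd0 (by positivity)]
            nlinarith
          linarith
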